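/- Let G be a topological group. The map Φ̃ : G² × G² → G⁴ defined by Φ̃(k, ν) = F̃_ν(ĩ(k)) is a homeomorphism satisfying π̃₁ ∘ Φ̃ = pr₁ (projection onto the first factor). Hence the gauge-invariant triple (G⁴, π̃₁, G²) is a trivial principal G²-fiber bundle with global section ĩ. -/

import Mathlib

/-- The induced refining map `ĩ : G² → G⁴`, `ĩ(k₁,k₂) = (k₁,1,1,k₂)`. -/
def refiningTil {G : Type*} [Group G] : G × G → G × G × G × G :=
  fun (k₁, k₂) => (k₁, 1, 1, k₂)

/-- The gauge-invariant coarse graining map `π̃₁ : G⁴ → G²`. -/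
def coarseTil₁ {G : Type*} [Group G] : G × G × G × G → G × G :=
  fun (h₁, h₂, h₃, h₄) => (h₁, h₄ * h₃ * h₂)

/-- The gauge-invariant family of maps `F̃_ν : G⁴ → G⁴` for `ν = (ν₁,ν₂) ∈ G²`. -/
def Ftil {G : Type*} [Group G] :
    G × G → (G × G × G × G) → G × G × G × G :=
  fun (ν₁, ν₂) (h₁, h₂, h₃, h₄) => (h₁, ν₁ * h₂, ν₂ * h₃ * ν₁⁻¹, h₄ * ν₂⁻¹)

/-- For a topological group `G`, the map `Φ̃ : G² × G² → G⁴`,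
`Φ̃(k, ν) = F̃_ν(ĩ(k))`, is a homeomorphism satisfying `π̃₁ ∘ Φ̃ = pr₁`.
Hence the gauge-invariant triple `(G⁴, π̃₁, G²)` is a trivial principal
`G²`-fiber bundle with global section `ĩ`. -/
theorem trivial_bundle_structure_gauge_invariant {G : Type*} [Group G]
    [TopologicalSpace G] [IsTopologicalGroup G] :
    ∃ Φ : ((G × G) × (G × G)) ≃ₜ (G × G × G × G),
      (∀ p : (G × G) × (G × G), Φ p = Ftil p.2 (refiningTil p.1)) ∧
      ∀ p : (G × G) × (G × G), coarseTil₁ (Φ p) = p.1 := by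
  refine ⟨{
    toFun := fun p => (p.1.1, p.2.1, p.2.2 * p.2.1⁻¹, p.1.2 * p.2.2⁻¹)
    invFun := fun h => ((h.1, h.2.2.2 * h.2.2.1 * h.2.1), (h.2.1, h.2.2.1 * h.2.1))
    left_inv := by intro p; obtain ⟨⟨a,b⟩,c,d⟩ := p; simp
    right_inv := by intro h; simp [mul_assoc]
    continuous_toFun := by fun_prop
    continuous_invFun := by fun_prop }, ?_, ?_⟩ <;>
  · rintro ⟨⟨k₁, k₂⟩, ⟨ν₁, ν₂⟩⟩
    simp [Ftil, refiningTil, coarseTil₁, mul_assoc]
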